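/- Let V be 2n-dimensional with symplectic form ω = Σ_{i=1}^n dx^{2i-1} ∧ dx^{2i} and let p be odd, 0 < p < 2n. Define the Lefschetz map L : V* → Λᵖ V* by L(φ) = φ ∧ ω^{(p-1)/2}. Then L is injective. -/

import Mathlib

open Module ExteriorAlgebra

namespace Stmt16

variable {R : Type*} [CommRing R] {M : Type*} [AddCommGroup M] [Module R M]

lemma iota_swap (u v : M) : ι R u * ι R v = -(ι R v * ι R u) :=
  eq_neg_of_add_eq_zero_left (ι_add_mul_swap u v)

lemma iota_pair_comm (u v w : M) :
    ι R w * (ι R u * ι R v) = ι R u * ι R v * ι R w := by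
  rw [← mul_assoc, iota_swap w u, neg_mul, mul_assoc, iota_swap w v, mul_neg, neg_neg,
    ← mul_assoc]

variable {N : ℕ} (a c : Fin N → M)

/-- abstract symplectic form -/
noncomputable def Ω : ExteriorAlgebra R M := ∑ i, ι R (a i) * ι R (c i)

/-- the image of a double-dual functional under contraction with Ω -/
noncomputable def J (f : Dual R M) : M := ∑ i, (f (a i) • c i - f (c i) • a i)

/-- contraction operator -/
noncomputable def D (f : Dual R M) : ExteriorAlgebra R M →ₗ[R] ExteriorAlgebra R M :=
  CliffordAlgebra.contractLeft (Q := (0 : QuadraticForm R M)) f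

lemma D_ι_mul (f : Dual R M) (u : M) (x : ExteriorAlgebra R M) :
    D f (ι R u * x) = f u • x - ι R u * D f x :=
  CliffordAlgebra.contractLeft_ι_mul f u x

lemma D_one (f : Dual R M) : D f (1 : ExteriorAlgebra R M) = 0 :=
  CliffordAlgebra.contractLeft_one _ f

lemma omega_comm (w : M) : ι R w * Ω a c = Ω a c * ι R w := by
  unfold Ω
  rw [Finset.mul_sum, Finset.sum_mul]
  exact Finset.sum_congr rfl fun i _ => iota_pair_comm _ _ _

lemma omega_pow_comm (w : M) (m : ℕ) : ι R w * (Ω a c) ^ m = (Ω a c) ^ m * ι R w :=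
  ((Commute.pow_right (omega_comm a c w) m))

lemma D_omega_mul (f : Dual R M) (x : ExteriorAlgebra R M) :
    D f (Ω a c * x) = ι R (J a c f) * x + Ω a c * D f x := by
  unfold Ω J
  rw [Finset.sum_mul, map_sum, map_sum, Finset.sum_mul, Finset.sum_mul, ← Finset.sum_add_distrib]
  refine Finset.sum_congr rfl fun i _ => ?_
  rw [mul_assoc, D_ι_mul, D_ι_mul]
  simp only [map_sub, map_smul, sub_mul, smul_mul_assoc, mul_sub, mul_smul_comm, mul_assoc]
  abel


lemma D_omega_pow_mul (f : Dual R M) (m : ℕ) (x : ExteriorAlgebra R M) :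
    D f ((Ω a c) ^ (m + 1) * x)
      = (m + 1 : ℕ) • (ι R (J a c f) * ((Ω a c) ^ m * x)) + (Ω a c) ^ (m + 1) * D f x := by
  induction m with
  | zero => simp [D_omega_mul]
  | succ m ih =>
    have h1 : ∀ y : ExteriorAlgebra R M, (Ω a c : ExteriorAlgebra R M) ^ (m + 1 + 1) * y
        = Ω a c * ((Ω a c) ^ (m + 1) * y) := by
      intro y; rw [pow_succ', mul_assoc]
    have h2 : Ω a c * (ι R (J a c f) * ((Ω a c) ^ m * x))
        = ι R (J a c f) * ((Ω a c) ^ (m + 1) * x) := by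
      rw [← mul_assoc, ← omega_comm, mul_assoc, ← mul_assoc (Ω a c), ← pow_succ']
    rw [h1, D_omega_mul, ih, mul_add, mul_smul_comm, h2, ← h1,
      succ_nsmul (ι R (J a c f) * ((Ω a c) ^ (m + 1) * x)) (m + 1)]
    abel

lemma D_omega_pow (f : Dual R M) (m : ℕ) :
    D f ((Ω a c) ^ (m + 1)) = (m + 1 : ℕ) • (ι R (J a c f) * (Ω a c) ^ m) := by
  have := D_omega_pow_mul a c f m 1
  simpa [D_one] using this


lemma hB (m : ℕ) (φ : M) (β : Dual R M) (i : Fin N) (hJβ : J a c β = -(a i)) :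
    D β (ι R φ * (Ω a c) ^ (m + 1))
      = β φ • (Ω a c) ^ (m + 1) + (m + 1) • (ι R φ * (ι R (a i) * (Ω a c) ^ m)) := by
  rw [D_ι_mul, D_omega_pow, hJβ]
  simp only [map_neg, neg_mul, smul_neg, mul_neg, mul_smul_comm, sub_neg_eq_add]

lemma master (m : ℕ) (φ : M) (α β : Fin N → Dual R M)
    (hJα : ∀ i, J a c (α i) = c i) (hJβ : ∀ i, J a c (β i) = -(a i))
    (hαa : ∀ i, α i (a i) = 1)
    (hexp : ∑ i, (β i φ • c i + α i φ • a i) = φ) :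
    ∑ i, D (α i) (D (β i) (ι R φ * (Ω a c) ^ (m + 1)))
      = ((m + 1 : ℤ) * (m + 1) - (m + 1) * N) • (ι R φ * (Ω a c) ^ m) := by
  have hC : ∀ i, D (α i) (D (β i) (ι R φ * (Ω a c) ^ (m + 1)))
      = (m + 1) • (β i φ • (ι R (c i) * (Ω a c) ^ m) + α i φ • (ι R (a i) * (Ω a c) ^ m)
          - ι R φ * (Ω a c) ^ m + ι R φ * (ι R (a i) * D (α i) ((Ω a c) ^ m))) := by
    intro i
    rw [hB a c m φ (β i) i (hJβ i), map_add, map_smul, map_nsmul, D_omega_pow, hJα,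
      D_ι_mul, D_ι_mul, hαa]
    simp only [one_smul, mul_sub, smul_sub, smul_add]
    rw [smul_comm ((β i) φ) (m + 1)]
    abel
  rw [Finset.sum_congr rfl fun i _ => hC i, ← Finset.smul_sum]
  have hsplit : ∑ i, (β i φ • (ι R (c i) * (Ω a c) ^ m) + α i φ • (ι R (a i) * (Ω a c) ^ m)
          - ι R φ * (Ω a c) ^ m + ι R φ * (ι R (a i) * D (α i) ((Ω a c) ^ m)))
      = ι R φ * (Ω a c) ^ m - N • (ι R φ * (Ω a c) ^ m) + m • (ι R φ * (Ω a c) ^ m) := by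
    rw [Finset.sum_add_distrib, Finset.sum_sub_distrib, Finset.sum_add_distrib]
    congr 1
    · congr 1
      · -- first double sum = ι φ * Ω^m
        have : ∀ i, β i φ • (ι R (c i) * (Ω a c) ^ m) + α i φ • (ι R (a i) * (Ω a c) ^ m)
            = ι R (β i φ • c i + α i φ • a i) * (Ω a c) ^ m := by
          intro i
          rw [map_add, map_smul, map_smul, add_mul, smul_mul_assoc, smul_mul_assoc]
        rw [← Finset.sum_add_distrib, Finset.sum_congr rfl fun i _ => this i, ← Finset.sum_mul, ← map_sum, hexp]
      · rw [Finset.sum_const, Finset.card_univ, Fintype.card_fin]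
    · -- last sum = m • (ι φ * Ω^m)
      cases m with
      | zero => simp [D_one]
      | succ r =>
        have : ∀ i : Fin N, ι R φ * (ι R (a i) * D (α i) ((Ω a c) ^ (r + 1)))
            = (r + 1) • (ι R φ * (ι R (a i) * (ι R (c i) * (Ω a c) ^ r))) := by
          intro i
          rw [D_omega_pow, hJα, mul_smul_comm, mul_smul_comm]
        rw [Finset.sum_congr rfl fun i _ => this i, ← Finset.smul_sum, ← Finset.mul_sum]
        congr 2
        have : ∀ i : Fin N, ι R (a i) * (ι R (c i) * (Ω a c) ^ r)
            = ι R (a i) * ι R (c i) * (Ω a c) ^ r := by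
          intro i; rw [mul_assoc]
        rw [Finset.sum_congr rfl fun i _ => this i, ← Finset.sum_mul]
        rw [show ∑ i, ι R (a i) * ι R (c i) = Ω a c from rfl, ← pow_succ']
  rw [hsplit]
  have hy : ∀ y : ExteriorAlgebra R M,
      (m + 1) • (y - N • y + m • y) = ((m + 1 : ℤ) * (m + 1) - (m + 1) * N) • y := by
    intro y
    have h1 : y - N • y + m • y = ((1 : ℤ) - N + m) • y := by
      rw [add_smul, sub_smul, one_smul, natCast_zsmul, natCast_zsmul]
    rw [h1, ← natCast_zsmul, smul_smul]
    congr 1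
    push_cast
    ring
  exact hy _


lemma J_apply (f : Dual R M) : J a c f = ∑ i, (f (a i) • c i - f (c i) • a i) := rfl

lemma sum_split {A : Type*} [AddCommMonoid A] (n : ℕ) (f : ℕ → A) :
    ∑ j ∈ Finset.range (2 * n), f j = ∑ i ∈ Finset.range n, (f (2 * i + 1) + f (2 * i)) := by
  induction n with
  | zero => simp
  | succ n ih =>
    rw [Finset.sum_range_succ, ← ih, show 2 * (n + 1) = (2 * n + 1) + 1 by ring,
      Finset.sum_range_succ, Finset.sum_range_succ]
    abel

end Stmt16




open Stmt16 in
set_option maxHeartbeats 1000000 in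
/-- the Lefschetz map `L(φ) = φ ∧ ω^{(p-1)/2}` from 1-forms to `p`-forms is
injective, for `p` odd with `0 < p < 2n` and `ω` the standard symplectic 2-form. -/
theorem stmt16 {n : ℕ} {V : Type*} [AddCommGroup V] [Module ℝ V] [FiniteDimensional ℝ V]
    (b : Basis (Fin (2 * n)) ℝ V)
    (dx : Fin (2 * n) → Dual ℝ V) (hdx : dx = ⇑b.dualBasis)
    (ω : ExteriorAlgebra ℝ (Dual ℝ V))
    (hω : ω = ∑ i : Fin n,
      ι ℝ (dx ⟨2 * (i : ℕ), by have := i.isLt; omega⟩) *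
        ι ℝ (dx ⟨2 * (i : ℕ) + 1, by have := i.isLt; omega⟩))
    (p : ℕ) (hpodd : Odd p) (hp0 : 0 < p) (hp2n : p < 2 * n) :
    Function.Injective fun φ : Dual ℝ V => ι ℝ φ * ω ^ ((p - 1) / 2) := by
  subst hdx
  set k := (p - 1) / 2 with hk
  have hkn : k < n := by
    obtain ⟨j, hj⟩ := hpodd
    omega
  set a : Fin n → Dual ℝ V := fun i =>
    b.dualBasis ⟨2 * (i : ℕ), by have := i.isLt; omega⟩ with ha
  set c : Fin n → Dual ℝ V := fun i =>
    b.dualBasis ⟨2 * (i : ℕ) + 1, by have := i.isLt; omega⟩ with hc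
  have hΩ : ω = Ω a c := by rw [hω]; rfl
  set α : Fin n → Dual ℝ (Dual ℝ V) := fun i =>
    Dual.eval ℝ V (b ⟨2 * (i : ℕ), by have := i.isLt; omega⟩) with hα
  set β : Fin n → Dual ℝ (Dual ℝ V) := fun i =>
    Dual.eval ℝ V (b ⟨2 * (i : ℕ) + 1, by have := i.isLt; omega⟩) with hβ
  have heval : ∀ (v : V) (ψ : Dual ℝ V), (Dual.eval ℝ V v) ψ = ψ v := fun _ _ => rfl
  have hdb : ∀ (l j : Fin (2 * n)), (b.dualBasis l) (b j) = if j = l then (1 : ℝ) else 0 :=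
    fun l j => b.dualBasis_apply_self l j
  have hJα : ∀ i, J a c (α i) = c i := by
    intro i
    rw [J_apply, Finset.sum_eq_single i]
    · simp only [hα, ha, hc, heval, hdb, Fin.mk.injEq]
      simp [Nat.left_eq_add]
    · intro j _ hji
      have hij : (j : ℕ) ≠ (i : ℕ) := fun hh => hji (Fin.ext hh)
      simp only [hα, ha, hc, heval, hdb, Fin.mk.injEq]
      rw [if_neg (by omega), if_neg (by omega)]
      simp
    · simp
  have hJβ : ∀ i, J a c (β i) = -(a i) := by
    intro i
    rw [J_apply, Finset.sum_eq_single i]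
    · simp only [hβ, ha, hc, heval, hdb, Fin.mk.injEq]
      simp [Nat.left_eq_add]
    · intro j _ hji
      have hij : (j : ℕ) ≠ (i : ℕ) := fun hh => hji (Fin.ext hh)
      simp only [hβ, ha, hc, heval, hdb, Fin.mk.injEq]
      rw [if_neg (by omega), if_neg (by omega)]
      simp
    · simp
  have hαa : ∀ i, α i (a i) = 1 := by
    intro i
    simp only [hα, ha, heval, hdb, Fin.mk.injEq]
    simp
  have hexp : ∀ φ : Dual ℝ V, ∑ i, (β i φ • c i + α i φ • a i) = φ := by
    intro φ
    have h1 : ∑ j : Fin (2 * n), φ (b j) • b.dualBasis j = φ := by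
      have h := b.sum_dual_apply_smul_coord φ
      rw [← b.coe_dualBasis] at h
      exact h
    set g : ℕ → Dual ℝ V := fun j =>
      if h : j < 2 * n then φ (b ⟨j, h⟩) • b.dualBasis ⟨j, h⟩ else 0 with hg
    have h2 : ∑ j : Fin (2 * n), φ (b j) • b.dualBasis j = ∑ j ∈ Finset.range (2 * n), g j := by
      rw [← Fin.sum_univ_eq_sum_range]
      exact Finset.sum_congr rfl fun j _ => by simp [hg, j.isLt]
    have h3 : ∑ i : Fin n, (β i φ • c i + α i φ • a i)
        = ∑ i ∈ Finset.range n, (g (2 * i + 1) + g (2 * i)) := by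
      rw [← Fin.sum_univ_eq_sum_range]
      refine Finset.sum_congr rfl fun i _ => ?_
      have hi1 : 2 * (i : ℕ) + 1 < 2 * n := by have := i.isLt; omega
      have hi0 : 2 * (i : ℕ) < 2 * n := by have := i.isLt; omega
      simp only [hg, dif_pos hi1, dif_pos hi0, hα, hβ, ha, hc, heval]
    rw [h3, ← sum_split, ← h2, h1]
  -- descent
  have hdesc : ∀ m, m < n → ∀ φ : Dual ℝ V, ι ℝ φ * (Ω a c : ExteriorAlgebra ℝ (Dual ℝ V)) ^ m = 0 → φ = 0 := by
    intro m
    induction m with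
    | zero =>
      intro _ φ h
      simpa using h
    | succ m ih =>
      intro hm φ h
      have h0 := master a c m φ α β hJα hJβ hαa (hexp φ)
      rw [h, Finset.sum_eq_zero (fun i _ => by rw [map_zero, map_zero])] at h0
      rw [← Int.cast_smul_eq_zsmul ℝ] at h0
      have hcoef : (((m + 1 : ℤ) * (m + 1) - (m + 1) * n : ℤ) : ℝ) ≠ 0 := by
        have hmn : (m : ℤ) + 1 < n := by exact_mod_cast hm
        have : ((m + 1 : ℤ) * (m + 1) - (m + 1) * n : ℤ) < 0 := by nlinarith
        exact_mod_cast this.ne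
      rcases smul_eq_zero.mp h0.symm with hbad | hgood
      · exact absurd hbad hcoef
      · exact ih (by omega) φ hgood
  intro φ ψ hfψ
  simp only at hfψ
  have hsub : ι ℝ (φ - ψ) * (Ω a c : ExteriorAlgebra ℝ (Dual ℝ V)) ^ k = 0 := by
    rw [map_sub, sub_mul, ← hΩ, hfψ, sub_self]
  have := hdesc k hkn (φ - ψ) hsub
  exact sub_eq_zero.mp this
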